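/- Let p > 0, h > 0, x > 0, ν ∈ [0,1), θ ∈ [0,1], q ≥ 0, s ≥ 0 with q + s > 0 and νq + s(θ + ν − θν) > 0. Write β = p(νq + s(θ + ν − θν))/(q + s) and H = h + (1 − ν)/(νq + s(θ + ν − θν)). Then 1 + hpx + p(ν − 1)[(hq − 1)x/(q + s) + h(1 − θ)sx/(q + s)] = 1 + βHx > 0 and νpx + θs(1 − ν)(p/(q + s))x = βx, so that the functional response f(x) = (νpx + θs(1 − ν)(p/(q+s))x)/(1 + hpx + p(ν − 1)[(hq − 1)x/(q+s) + h(1 − θ)sx/(q+s)]) equals βx/(1 + βHx), a Holling type II functional response. -/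

import Mathlib

/-- The functional response derived from the fast stand-off dynamics is a
Holling type II functional response: the denominator equals `1 + βHx > 0`
and the numerator equals `βx`, with effective capture rate `β` and effective
handling time `H`. -/
theorem stmt13 (p h x ν θ q s β H : ℝ)
    (hp : 0 < p) (hh : 0 < h) (hx : 0 < x)
    (hν : ν ∈ Set.Ico (0 : ℝ) 1) (hθ : θ ∈ Set.Icc (0 : ℝ) 1)
    (hq : 0 ≤ q) (hs : 0 ≤ s) (hqs : 0 < q + s)
    (hB : 0 < ν * q + s * (θ + ν - θ * ν))
    (hβ : β = p * (ν * q + s * (θ + ν - θ * ν)) / (q + s))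
    (hH : H = h + (1 - ν) / (ν * q + s * (θ + ν - θ * ν))) :
    (1 + h * p * x +
        p * (ν - 1) * ((h * q - 1) * x / (q + s) + h * (1 - θ) * s * x / (q + s))
      = 1 + β * H * x) ∧
    (0 < 1 + β * H * x) ∧
    (ν * p * x + θ * s * (1 - ν) * (p / (q + s)) * x = β * x) ∧
    ((ν * p * x + θ * s * (1 - ν) * (p / (q + s)) * x) /
        (1 + h * p * x +
          p * (ν - 1) * ((h * q - 1) * x / (q + s) + h * (1 - θ) * s * x / (q + s)))
      = β * x / (1 + β * H * x)) := by
  have hqs' : q + s ≠ 0 := ne_of_gt hqs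
  have hB' : ν * q + s * (θ + ν - θ * ν) ≠ 0 := ne_of_gt hB
  have hβpos : 0 < β := by
    rw [hβ]; positivity
  have hHpos : 0 < H := by
    rw [hH]
    have : 0 ≤ (1 - ν) / (ν * q + s * (θ + ν - θ * ν)) :=
      div_nonneg (by linarith [hν.2]) hB.le
    linarith
  have hden : 1 + h * p * x +
      p * (ν - 1) * ((h * q - 1) * x / (q + s) + h * (1 - θ) * s * x / (q + s))
      = 1 + β * H * x := by
    subst hβ hH
    have hB'' : ν * q + s * (θ + ν - ν * θ) ≠ 0 := by rw [mul_comm ν θ]; exact hB'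
    field_simp
    ring
  have hpos : 0 < 1 + β * H * x := by positivity
  have hnum : ν * p * x + θ * s * (1 - ν) * (p / (q + s)) * x = β * x := by
    subst hβ
    field_simp
    ring
  exact ⟨hden, hpos, hnum, by rw [hden, hnum]⟩
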